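/- Let rho = (rho_1,...,rho_h) be an h-tuple of finite sequences of Reeb chords of the torus algebra, let m >= 1, let tau be an m-splicing of rho, and let k be an index with 0 < k < m+1. Suppose there exists an interleaving sigma_0 of rho (i.e. an (m+1)-splicing with Col(sigma_0) = 0) for which k is collidable and sigma_0(k) = tau. Then there are exactly two interleavings sigma of rho such that k is collidable for sigma and sigma(k) = tau. -/
import Mathlib


/-! ## The torus algebra -/

/-- The two idempotents of the torus algebra. -/
inductive Idem : Type
  | m | l
deriving DecidableEq

/-- Reeb chords of the torus algebra. -/
inductive Chord : Type
  | r1 | r2 | r3 | r12 | r23 | r123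
deriving DecidableEq

open Chord

/-- The idempotent `ι` with `ι * ρ = ρ`. -/
def iotaStart : Chord → Idem
  | r1 => Idem.m | r2 => Idem.l | r3 => Idem.m
  | r12 => Idem.m | r23 => Idem.l | r123 => Idem.m

/-- The idempotent `ι` with `ρ * ι = ρ`. -/
def iotaEnd : Chord → Idem
  | r1 => Idem.l | r2 => Idem.m | r3 => Idem.l
  | r12 => Idem.m | r23 => Idem.l | r123 => Idem.l

/-- A chord is jumping if its starting and ending idempotents differ. -/
def Jumping (c : Chord) : Prop := iotaStart c ≠ iotaEnd c

instance (c : Chord) : Decidable (Jumping c) := by unfold Jumping; infer_instance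

/-- The subsequence of jumping chords of a sequence of Reeb chords. -/
def jumpList (l : List Chord) : List Chord := l.filter (fun c => decide (Jumping c))

/-- The number of jumping chords of a sequence. -/
abbrev numJumps (l : List Chord) : ℕ := (jumpList l).length

/-! ## Splicings

An `m`-splicing of an `h`-tuple `ρ` of finite sequences of Reeb chords is, for each `j`, an
ordered partition of `jump (ρ j)` into `m` possibly empty parts, each of size at most one,
such that every part-column is nonempty for at least one `j`.  Since the entries of
`jump (ρ j)` are distributed among the parts in order and each part has at most one element,
such a partition is the same as a strictly monotone function sending the position of each
jumping chord to the (0-based) index of the column containing it. -/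
def Splicing (h : ℕ) (ρ : Fin h → List Chord) (m : ℕ) : Type :=
  { p : (j : Fin h) → Fin (numJumps (ρ j)) → Fin m //
      (∀ (j : Fin h) (s t : Fin (numJumps (ρ j))), s < t → p j s < p j t) ∧
      (∀ i : Fin m, ∃ (j : Fin h) (s : Fin (numJumps (ρ j))), p j s = i) }

instance (h : ℕ) (ρ : Fin h → List Chord) (m : ℕ) : Finite (Splicing h ρ m) := by
  unfold Splicing; infer_instance

noncomputable instance (h : ℕ) (ρ : Fin h → List Chord) (m : ℕ) : Fintype (Splicing h ρ m) :=
  Fintype.ofFinite _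

/-- A splicing is an interleaving if `Col σ = 0`, i.e. no column receives jumping chords
from more than one of the sequences. -/
def IsInterleaving {h m : ℕ} {ρ : Fin h → List Chord} (σ : Splicing h ρ m) : Prop :=
  ∀ i : Fin m, ¬ ∃ j₁ j₂ : Fin h, j₁ ≠ j₂ ∧
    (∃ s, σ.1 j₁ s = i) ∧ (∃ s, σ.1 j₂ s = i)

/-- `IsCollision σ k τ` says that the (0-based) index `k` is collidable for `σ` (columns `k`
and `k+1` exist, and for every `j` at most one of them contains a chord of `jump (ρ j)`) and
that `τ` is the collision `σ(k)`, i.e. the splicing obtained from `σ` by amalgamating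
columns `k` and `k+1`. -/
def IsCollision {h m m' : ℕ} {ρ : Fin h → List Chord}
    (σ : Splicing h ρ m) (k : ℕ) (τ : Splicing h ρ m') : Prop :=
  m = m' + 1 ∧ k + 1 < m ∧
  (∀ j : Fin h, ¬ ((∃ s, (σ.1 j s : ℕ) = k) ∧ (∃ s, (σ.1 j s : ℕ) = k + 1))) ∧
  (∀ (j : Fin h) (s : Fin (numJumps (ρ j))),
    (τ.1 j s : ℕ) = if (σ.1 j s : ℕ) ≤ k then (σ.1 j s : ℕ) else (σ.1 j s : ℕ) - 1)

/-! ### Auxiliary lemmas -/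

private lemma splicing_inj {h m : ℕ} {ρ : Fin h → List Chord} (σ : Splicing h ρ m)
    (j : Fin h) {s t : Fin (numJumps (ρ j))} (hne : σ.1 j s = σ.1 j t) : s = t := by
  rcases lt_trichotomy s t with hlt | he | hlt
  · exact absurd hne (ne_of_lt (σ.2.1 j s t hlt))
  · exact he
  · exact absurd hne.symm (ne_of_lt (σ.2.1 j t s hlt))

/-- If some interleaving of `ρ` admits the `m`-splicing `τ` as its collision at the index
`k`, then there are exactly two interleavings `σ` of `ρ` for which `k` is collidable and
whose collision at `k` is `τ`.  (Columns are indexed from `0`, so the paper's collidable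
index `0 < k < m+1` for an `(m+1)`-splicing corresponds to `0 ≤ k < m` here.) -/
theorem two_interleavings_with_given_collision
    (h : ℕ) (hh : 1 ≤ h) (ρ : Fin h → List Chord) (m : ℕ) (hm : 1 ≤ m)
    (τ : Splicing h ρ m) (k : ℕ) (hk : k < m)
    (hex : ∃ σ₀ : Splicing h ρ (m + 1), IsInterleaving σ₀ ∧ IsCollision σ₀ k τ) :
    {σ : Splicing h ρ (m + 1) | IsInterleaving σ ∧ IsCollision σ k τ}.ncard = 2 := by
  obtain ⟨σ₀, hI, hC⟩ := hex
  obtain ⟨-, hk1, hcol, heq⟩ := hC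
  set kF : Fin (m + 1) := ⟨k, by omega⟩ with hkFdef
  set k1F : Fin (m + 1) := ⟨k + 1, by omega⟩ with hk1Fdef
  have hkF : (kF : ℕ) = k := rfl
  have hk1F : (k1F : ℕ) = k + 1 := rfl
  obtain ⟨j₁, s₁, hs₁⟩ := σ₀.2.2 kF
  obtain ⟨j₂, s₂, hs₂⟩ := σ₀.2.2 k1F
  have hs₁v : (σ₀.1 j₁ s₁ : ℕ) = k := by rw [hs₁]
  have hs₂v : (σ₀.1 j₂ s₂ : ℕ) = k + 1 := by rw [hs₂]
  have hj12 : j₁ ≠ j₂ := by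
    intro he
    subst he
    exact hcol j₁ ⟨⟨s₁, hs₁v⟩, ⟨s₂, hs₂v⟩⟩
  -- the swap of columns k and k+1
  set g : Fin (m + 1) → Fin (m + 1) := fun a =>
    if (a : ℕ) = k then k1F else if (a : ℕ) = k + 1 then kF else a with hgdef
  have hgval : ∀ a : Fin (m + 1),
      (g a : ℕ) = if (a : ℕ) = k then k + 1 else if (a : ℕ) = k + 1 then k else (a : ℕ) := by
    intro a
    simp only [hgdef]
    split_ifs <;> rfl
  -- the second interleaving
  have hmono2 : ∀ (j : Fin h) (s t : Fin (numJumps (ρ j))), s < t →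
      g (σ₀.1 j s) < g (σ₀.1 j t) := by
    intro j s t hst
    have hab : (σ₀.1 j s : ℕ) < (σ₀.1 j t : ℕ) := σ₀.2.1 j s t hst
    have hnc : ¬ ((σ₀.1 j s : ℕ) = k ∧ (σ₀.1 j t : ℕ) = k + 1) := by
      intro ⟨h1, h2⟩; exact hcol j ⟨⟨s, h1⟩, ⟨t, h2⟩⟩
    rw [Fin.lt_def, hgval, hgval]
    split_ifs <;> omega
  have hsurj2 : ∀ i : Fin (m + 1), ∃ (j : Fin h) (s : Fin (numJumps (ρ j))),
      g (σ₀.1 j s) = i := by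
    intro i
    by_cases hik : (i : ℕ) = k
    · refine ⟨j₂, s₂, Fin.ext ?_⟩
      rw [hgval]
      split_ifs <;> omega
    · by_cases hik1 : (i : ℕ) = k + 1
      · refine ⟨j₁, s₁, Fin.ext ?_⟩
        rw [hgval]
        split_ifs <;> omega
      · obtain ⟨j, s, hjs⟩ := σ₀.2.2 i
        have hv : (σ₀.1 j s : ℕ) = (i : ℕ) := by rw [hjs]
        refine ⟨j, s, Fin.ext ?_⟩
        rw [hgval]
        split_ifs <;> omega
  set σ' : Splicing h ρ (m + 1) := ⟨fun j s => g (σ₀.1 j s), hmono2, hsurj2⟩ with hσ'def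
  have hginv : ∀ a : Fin (m + 1), g (g a) = a := by
    intro a
    apply Fin.ext
    rw [hgval, hgval]
    split_ifs <;> omega
  have hI' : IsInterleaving σ' := by
    rintro i ⟨ja, jb, hne, ⟨sa, ha⟩, ⟨sb, hb⟩⟩
    refine hI (g i) ⟨ja, jb, hne, ⟨sa, ?_⟩, ⟨sb, ?_⟩⟩
    · rw [show σ₀.1 ja sa = g (σ'.1 ja sa) from (hginv _).symm, ha]
    · rw [show σ₀.1 jb sb = g (σ'.1 jb sb) from (hginv _).symm, hb]
  have hC' : IsCollision σ' k τ := by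
    refine ⟨rfl, hk1, ?_, ?_⟩
    · rintro j ⟨⟨sa, ha⟩, ⟨sb, hb⟩⟩
      have ha' : (σ'.1 j sa : ℕ) = k := ha
      have hb' : (σ'.1 j sb : ℕ) = k + 1 := hb
      rw [show (σ'.1 j sa : ℕ) = (g (σ₀.1 j sa) : ℕ) from rfl, hgval] at ha'
      rw [show (σ'.1 j sb : ℕ) = (g (σ₀.1 j sb) : ℕ) from rfl, hgval] at hb'
      refine hcol j ⟨⟨sb, ?_⟩, ⟨sa, ?_⟩⟩
      · split_ifs at hb' <;> omega
      · split_ifs at ha' <;> omega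
    · intro j s
      rw [heq j s, show (σ'.1 j s : ℕ) = (g (σ₀.1 j s) : ℕ) from rfl, hgval]
      split_ifs <;> omega
  -- uniqueness of the chords in the two columns
  have hU1 : ∀ (j : Fin h) (s : Fin (numJumps (ρ j))), (σ₀.1 j s : ℕ) = k → j = j₁ := by
    intro j s hjs
    by_contra hne
    exact hI kF ⟨j, j₁, hne, ⟨s, Fin.ext hjs⟩, ⟨s₁, hs₁⟩⟩
  have hU2 : ∀ (j : Fin h) (s : Fin (numJumps (ρ j))), (σ₀.1 j s : ℕ) = k + 1 → j = j₂ := by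
    intro j s hjs
    by_contra hne
    exact hI k1F ⟨j, j₂, hne, ⟨s, Fin.ext hjs⟩, ⟨s₂, hs₂⟩⟩
  have hne01 : σ₀ ≠ σ' := by
    intro he
    have := congrArg (fun σ : Splicing h ρ (m + 1) => (σ.1 j₁ s₁ : ℕ)) he
    simp only [hσ'def] at this
    rw [hgval] at this
    split_ifs at this <;> omega
  have hset : {σ : Splicing h ρ (m + 1) | IsInterleaving σ ∧ IsCollision σ k τ}
      = {σ₀, σ'} := by
    ext σ
    simp only [Set.mem_setOf_eq, Set.mem_insert_iff, Set.mem_singleton_iff]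
    constructor
    · rintro ⟨hIσ, hCσ⟩
      obtain ⟨-, -, hcolσ, heqσ⟩ := hCσ
      have hrel : ∀ (j : Fin h) (s : Fin (numJumps (ρ j))),
          (if (σ.1 j s : ℕ) ≤ k then (σ.1 j s : ℕ) else (σ.1 j s : ℕ) - 1)
          = (if (σ₀.1 j s : ℕ) ≤ k then (σ₀.1 j s : ℕ) else (σ₀.1 j s : ℕ) - 1) := by
        intro j s
        rw [← heqσ j s, ← heq j s]
      have hother : ∀ (j : Fin h) (s : Fin (numJumps (ρ j))),
          (σ₀.1 j s : ℕ) ≠ k → (σ₀.1 j s : ℕ) ≠ k + 1 → (σ.1 j s : ℕ) = (σ₀.1 j s : ℕ) := by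
        intro j s h1 h2
        have := hrel j s
        split_ifs at this <;> omega
      have hmem2 : ∀ (j : Fin h) (s : Fin (numJumps (ρ j))), (σ₀.1 j s : ℕ) = k ∨
          (σ₀.1 j s : ℕ) = k + 1 → (σ.1 j s : ℕ) = k ∨ (σ.1 j s : ℕ) = k + 1 := by
        intro j s hjs
        have := hrel j s
        split_ifs at this <;> omega
      rcases hmem2 j₁ s₁ (Or.inl hs₁v) with hA | hA
      · -- σ = σ₀
        left
        apply Subtype.ext
        funext j s
        by_cases h0 : (σ₀.1 j s : ℕ) = k
        · have hj := hU1 j s h0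
          subst hj
          have hss : s = s₁ := splicing_inj σ₀ j (Fin.ext (h0.trans hs₁v.symm))
          subst hss
          exact Fin.ext (by omega)
        · by_cases h1 : (σ₀.1 j s : ℕ) = k + 1
          · have hj := hU2 j s h1
            subst hj
            have hss : s = s₂ := splicing_inj σ₀ j (Fin.ext (h1.trans hs₂v.symm))
            subst hss
            rcases hmem2 j s (Or.inr hs₂v) with hB | hB
            · exact absurd ⟨j₁, j, hj12, ⟨s₁, Fin.ext hA⟩, ⟨s, Fin.ext hB⟩⟩ (hIσ kF)
            · exact Fin.ext (by omega)
          · exact Fin.ext (hother j s h0 h1)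
      · -- σ = σ'
        right
        apply Subtype.ext
        funext j s
        have hval : (σ'.1 j s : ℕ) =
            if (σ₀.1 j s : ℕ) = k then k + 1 else if (σ₀.1 j s : ℕ) = k + 1
              then k else (σ₀.1 j s : ℕ) := hgval _
        by_cases h0 : (σ₀.1 j s : ℕ) = k
        · have hj := hU1 j s h0
          subst hj
          have hss : s = s₁ := splicing_inj σ₀ j (Fin.ext (h0.trans hs₁v.symm))
          subst hss
          apply Fin.ext
          rw [hval]
          split_ifs <;> omega
        · by_cases h1 : (σ₀.1 j s : ℕ) = k + 1
          · have hj := hU2 j s h1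
            subst hj
            have hss : s = s₂ := splicing_inj σ₀ j (Fin.ext (h1.trans hs₂v.symm))
            subst hss
            rcases hmem2 j s (Or.inr hs₂v) with hB | hB
            · apply Fin.ext
              rw [hval]
              split_ifs <;> omega
            · exact absurd ⟨j₁, j, hj12, ⟨s₁, Fin.ext hA⟩, ⟨s, Fin.ext hB⟩⟩ (hIσ k1F)
          · have := hother j s h0 h1
            apply Fin.ext
            rw [hval]
            split_ifs <;> omega
    · rintro (rfl | rfl)
      · exact ⟨hI, rfl, hk1, hcol, heq⟩
      · exact ⟨hI', hC'⟩
  rw [hset]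
  exact Set.ncard_pair hne01
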